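/- Let U = {(x,y,z) ∈ ℝ³ : x,y,z > 0, x < y+z+1, y < x+z+1, z < x+y+1, 1 < x+y+z}, V = {(x,y,z) ∈ ℝ³ : x,y,z > 0, x+y+z = 1}, and W = {(x,y,z) ∈ ℝ³ : x,y,z > 0, y+z > x, x+z > y, x+y > z}. Then U equals the Minkowski sum of V and W, i.e., U = {v + w : v ∈ V, w ∈ W}. -/

import Mathlib

theorem minkowski_sum_UVW :
    {p : ℝ × ℝ × ℝ | 0 < p.1 ∧ 0 < p.2.1 ∧ 0 < p.2.2 ∧
      p.1 < p.2.1 + p.2.2 + 1 ∧ p.2.1 < p.1 + p.2.2 + 1 ∧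
      p.2.2 < p.1 + p.2.1 + 1 ∧ 1 < p.1 + p.2.1 + p.2.2} =
    {u : ℝ × ℝ × ℝ | ∃ v ∈ {p : ℝ × ℝ × ℝ | 0 < p.1 ∧ 0 < p.2.1 ∧ 0 < p.2.2 ∧
        p.1 + p.2.1 + p.2.2 = 1},
      ∃ w ∈ {p : ℝ × ℝ × ℝ | 0 < p.1 ∧ 0 < p.2.1 ∧ 0 < p.2.2 ∧
        p.2.1 + p.2.2 > p.1 ∧ p.1 + p.2.2 > p.2.1 ∧ p.1 + p.2.1 > p.2.2},
      u = v + w} := by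
  ext p
  obtain ⟨x, y, z⟩ := p
  simp only [Set.mem_setOf_eq]
  constructor
  · rintro ⟨hx, hy, hz, h1, h2, h3, hs⟩
    set lp : ℝ := max 0 ((y + z - x - 1) / 2) with hlp_def
    set lq : ℝ := max 0 ((x + z - y - 1) / 2) with hlq_def
    set lr : ℝ := max 0 ((x + y - z - 1) / 2) with hlr_def
    have hlp0 : 0 ≤ lp := le_max_left _ _
    have hlq0 : 0 ≤ lq := le_max_left _ _
    have hlr0 : 0 ≤ lr := le_max_left _ _
    have hlp1 : (y + z - x - 1) / 2 ≤ lp := le_max_right _ _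
    have hlq1 : (x + z - y - 1) / 2 ≤ lq := le_max_right _ _
    have hlr1 : (x + y - z - 1) / 2 ≤ lr := le_max_right _ _
    have key : lp + lq + lr < (x + y + z - 1) / 2 := by
      rcases max_cases (0:ℝ) ((y + z - x - 1) / 2) with ⟨e1, f1⟩ | ⟨e1, f1⟩ <;>
      rcases max_cases (0:ℝ) ((x + z - y - 1) / 2) with ⟨e2, f2⟩ | ⟨e2, f2⟩ <;>
      rcases max_cases (0:ℝ) ((x + y - z - 1) / 2) with ⟨e3, f3⟩ | ⟨e3, f3⟩ <;>
      rw [hlp_def, hlq_def, hlr_def, e1, e2, e3] <;> linarith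
    set d : ℝ := (x + y + z - 1) / 2 - (lp + lq + lr) with hd_def
    clear_value lp lq lr d
    have hd : 0 < d := by linarith
    set P : ℝ := lp + d / 3 with hP_def
    set Q : ℝ := lq + d / 3 with hQ_def
    set R : ℝ := lr + d / 3 with hR_def
    clear_value P Q R
    refine ⟨(x - Q - R, y - P - R, z - P - Q), ⟨?_, ?_, ?_, ?_⟩,
      (Q + R, P + R, P + Q), ⟨?_, ?_, ?_, ?_, ?_, ?_⟩, ?_⟩ <;>
      dsimp -failIfUnchanged only
    · linarith
    · linarith
    · linarith
    · linarith
    · linarith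
    · linarith
    · linarith
    · linarith
    · linarith
    · linarith
    · simp only [Prod.mk_add_mk, Prod.mk.injEq]
      refine ⟨by ring, by ring, by ring⟩
  · rintro ⟨⟨v1, v2, v3⟩, ⟨hv1, hv2, hv3, hvs⟩, ⟨w1, w2, w3⟩,
      ⟨hw1, hw2, hw3, ht1, ht2, ht3⟩, hpe⟩
    simp only [Prod.mk_add_mk, Prod.mk.injEq] at hpe
    obtain ⟨e1, e2, e3⟩ := hpe
    subst e1; subst e2; subst e3
    simp only [Set.mem_setOf_eq] at *
    refine ⟨by linarith, by linarith, by linarith, by linarith, by linarith,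
      by linarith, by linarith⟩
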